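/- On a ≺-smooth fitness landscape, any ascent-following local search never unflips a correct variable: if i ∈ φ⊖(x^t) for some assignment x^t in an ascent, then x^s_i = x^t_i for all subsequent assignments x^s (s ≥ t) in the ascent. -/

import Mathlib

variable {n : ℕ}

def flipBit (x : Fin n → Bool) (i : Fin n) : Fin n → Bool :=
  Function.update x i (!(x i))

def PrecSmooth (r : Fin n → Fin n → Prop) (f : (Fin n → Bool) → ℤ)
    (xs : Fin n → Bool) : Prop :=
  ∀ (j : Fin n) (x : Fin n → Bool), (∀ i, r i j → x i = xs i) →
    f (Function.update x j (xs j)) > f (Function.update x j (!(xs j)))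

/-- `i` is correct at `x` (`i ∈ φ⊖(x)`): every `j ⪯ i` is in the in-map
`φ⁻(x)`, i.e. flipping `j` does not increase fitness. -/
def Correct (r : Fin n → Fin n → Prop) (f : (Fin n → Bool) → ℤ)
    (x : Fin n → Bool) (i : Fin n) : Prop :=
  ∀ j, (r j i ∨ j = i) → f (flipBit x j) ≤ f x

lemma aux_Q_flip_lt (f : (Fin n → Bool) → ℤ) (r : Fin n → Fin n → Prop)
    (hr : IsStrictOrder (Fin n) r) (xs : Fin n → Bool) (hs : PrecSmooth r f xs)
    (x : Fin n → Bool) (i : Fin n) (hQ : ∀ j, (r j i ∨ j = i) → x j = xs j) :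
    ∀ j, (r j i ∨ j = i) → f (flipBit x j) < f x := by
  intro j hj
  have h1 : ∀ k, r k j → x k = xs k := by
    intro k hk
    apply hQ
    rcases hj with h | h
    · exact Or.inl (hr.toIsTrans.trans _ _ _ hk h)
    · exact Or.inl (h ▸ hk)
  have h2 := hs j x h1
  have hx : x j = xs j := hQ j hj
  have e1 : Function.update x j (xs j) = x := by
    rw [← hx, Function.update_eq_self]
  have e2 : Function.update x j (!(xs j)) = flipBit x j := by
    rw [← hx]; rfl
  rw [e1, e2] at h2
  exact h2

lemma aux_correct_val (f : (Fin n → Bool) → ℤ) (r : Fin n → Fin n → Prop)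
    (hr : IsStrictOrder (Fin n) r) (xs : Fin n → Bool) (hs : PrecSmooth r f xs)
    (x : Fin n → Bool) : ∀ i, Correct r f x i → x i = xs i := by
  have hwf : WellFounded r := by
    have := hr.toIrrefl; have := hr.toIsTrans
    exact Finite.wellFounded_of_trans_of_irrefl r
  intro i
  induction i using hwf.induction with
  | _ i ih =>
    intro hC
    have hQbelow : ∀ j, r j i → x j = xs j := by
      intro j hj
      apply ih j hj
      intro k hk
      apply hC
      rcases hk with h | h
      · exact Or.inl (hr.toIsTrans.trans _ _ _ h hj)
      · exact Or.inl (h ▸ hj)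
    by_contra hne
    have hx : x i = !(xs i) := by
      cases h : xs i <;> cases h' : x i <;> simp_all
    have h2 := hs i x hQbelow
    have e1 : Function.update x i (xs i) = flipBit x i := by
      unfold flipBit; rw [hx, Bool.not_not]
    have e2 : Function.update x i (!(xs i)) = x := by
      rw [← hx, Function.update_eq_self]
    rw [e1, e2] at h2
    exact absurd h2 (not_lt.mpr (hC i (Or.inr rfl)))

/-- On a `≺`-smooth landscape, an ascent never unflips a correct variable:
once `i ∈ φ⊖(x^t)`, bit `i` keeps its value for the rest of the ascent. -/
theorem ascent_never_unflips_correct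
    (f : (Fin n → Bool) → ℤ) (r : Fin n → Fin n → Prop)
    (hr : IsStrictOrder (Fin n) r) (xs : Fin n → Bool)
    (hs : PrecSmooth r f xs) (T : ℕ) (p : ℕ → (Fin n → Bool))
    (hstep : ∀ t < T, (∃ i, p (t + 1) = flipBit (p t) i) ∧ f (p t) < f (p (t + 1)))
    (t : ℕ) (ht : t ≤ T) (i : Fin n) (hi : Correct r f (p t) i) :
    ∀ s, t ≤ s → s ≤ T → p s i = p t i := by
  -- Q s : all bits ⪯ i equal the optimum at time s
  have hQt : ∀ j, (r j i ∨ j = i) → p t j = xs j := by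
    intro j hj
    apply aux_correct_val f r hr xs hs (p t) j
    intro k hk
    apply hi
    rcases hj with h | h
    · rcases hk with h' | h'
      · exact Or.inl (hr.toIsTrans.trans _ _ _ h' h)
      · exact Or.inl (h' ▸ h)
    · exact h ▸ hk
  have key : ∀ s, t ≤ s → s ≤ T → ∀ j, (r j i ∨ j = i) → p s j = xs j := by
    intro s hts
    induction s, hts using Nat.le_induction with
    | base => intro _; exact hQt
    | succ s hts ih =>
      intro hsT
      have hsT' : s < T := Nat.lt_of_succ_le hsT
      have hQ := ih (le_of_lt hsT')
      obtain ⟨⟨k, hk⟩, hlt⟩ := hstep s hsT'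
      have hknot : ¬ (r k i ∨ k = i) := by
        intro hki
        have := aux_Q_flip_lt f r hr xs hs (p s) i hQ k hki
        rw [← hk] at this
        exact absurd hlt (not_lt.mpr (le_of_lt this))
      intro j hj
      have hjk : j ≠ k := fun h => hknot (h ▸ hj)
      rw [hk]
      unfold flipBit
      rw [Function.update_of_ne hjk]
      exact hQ j hj
  intro s hts hsT
  rw [key s hts hsT i (Or.inr rfl), hQt i (Or.inr rfl)]
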